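/- For y > 1, β ≥ 0, and t = y^(1/u) with u > 0, define h_β(t) = [β²(t-1)² + 2β(t-1)t + (t+1)t] log t − 2(t−1)[β(t−1) + t]. Then h_β(t) > 0 for all t > 1 and all β ≥ 0. -/

import Mathlib

/-- For `t > 1`, `1 - 1/t < log t`. -/
lemma log_lower (t : ℝ) (ht : 1 < t) : 1 - 1/t < Real.log t := by
  have ht0 : 0 < t := lt_trans one_pos ht
  have h := Real.log_lt_sub_one_of_pos (x := 1/t) (by positivity) (by
    intro h
    have : t = 1 := by field_simp at h; linarith
    linarith)
  rw [Real.log_div one_ne_zero (ne_of_gt ht0), Real.log_one] at h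
  linarith

/-- For `t > 1`, `2 * (t - 1) < (t + 1) * log t`. -/
lemma key_ineq (t : ℝ) (ht : 1 < t) : 2 * (t - 1) < (t + 1) * Real.log t := by
  set f : ℝ → ℝ := fun x => (x + 1) * Real.log x - 2 * (x - 1) with hf
  have hmono : StrictMonoOn f (Set.Ici 1) := by
    apply strictMonoOn_of_deriv_pos (convex_Ici 1)
    · apply ContinuousOn.sub
      · apply ContinuousOn.mul (by fun_prop)
        apply ContinuousOn.log (by fun_prop)
        intro x hx
        simp only [Set.mem_Ici] at hx
        linarith
      · fun_prop
    · intro x hx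
      rw [interior_Ici, Set.mem_Ioi] at hx
      have hx0 : 0 < x := lt_trans one_pos hx
      have hd : HasDerivAt f (Real.log x + (x + 1) / x - 2) x := by
        have h1 : HasDerivAt (fun y : ℝ => (y + 1) * Real.log y)
            (1 * Real.log x + (x + 1) * x⁻¹) x :=
          HasDerivAt.mul ((hasDerivAt_id x).add_const 1) (Real.hasDerivAt_log (ne_of_gt hx0))
        have h2 : HasDerivAt (fun y : ℝ => 2 * (y - 1)) 2 x := by
          simpa using ((hasDerivAt_id x).sub_const 1).const_mul 2
        have := h1.sub h2
        rw [show Real.log x + (x + 1) / x - 2 = 1 * Real.log x + (x + 1) * x⁻¹ - 2 by ring]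
        exact this
      rw [hd.deriv]
      have hlog := log_lower x hx
      have : (x + 1) / x = 1 + 1 / x := by field_simp
      rw [this]
      linarith
  have h1 : f 1 < f t := hmono (Set.self_mem_Ici) (Set.mem_Ici.mpr (le_of_lt ht)) ht
  simp only [hf, Real.log_one] at h1
  linarith

theorem stmt19 (β : ℝ) (hβ : 0 ≤ β) (t : ℝ) (ht : 1 < t) :
    0 < (β ^ 2 * (t - 1) ^ 2 + 2 * β * (t - 1) * t + (t + 1) * t) * Real.log t -
        2 * (t - 1) * (β * (t - 1) + t) := by
  have ht0 : 0 < t := lt_trans one_pos ht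
  have hA : 1 - 1/t < Real.log t := log_lower t ht
  have hA' : t - 1 < t * Real.log t := by
    have := mul_lt_mul_of_pos_left hA ht0
    have ht' : t * (1 - 1/t) = t - 1 := by field_simp
    linarith [ht'.symm ▸ this]
  have hB : 2 * (t - 1) < (t + 1) * Real.log t := key_ineq t ht
  have hlog : 0 < Real.log t := Real.log_pos ht
  nlinarith [mul_nonneg (mul_nonneg (sq_nonneg β) (sq_nonneg (t - 1))) hlog.le,
    mul_nonneg (mul_nonneg hβ (by linarith : (0:ℝ) ≤ t - 1)) (by linarith : (0:ℝ) ≤ t * Real.log t - (t - 1)),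
    mul_pos ht0 (by linarith : (0:ℝ) < (t + 1) * Real.log t - 2 * (t - 1))]
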